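/- Let G be a finite group and k a positive integer. Then k · rank(G/G') ≤ rank(G^k) ≤ k · rank(G), where G' is the commutator subgroup of G. -/

import Mathlib

open Subgroup

/-- Minimal length of a word over `X` (positive letters only) representing `g`. -/
noncomputable def wLen {G : Type*} [Group G] (X : Set G) (g : G) : ℕ :=
  sInf {n | ∃ l : List G, (∀ x ∈ l, x ∈ X) ∧ l.length = n ∧ l.prod = g}

/-- Minimal length of a word over `X ∪ X⁻¹` representing `g`. -/
noncomputable def sLen {G : Type*} [Group G] (X : Set G) (g : G) : ℕ :=
  sInf {n | ∃ l : List G, (∀ x ∈ l, x ∈ X ∨ x⁻¹ ∈ X) ∧ l.length = n ∧ l.prod = g}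

/-- Diameter of `G` with respect to `X` (positive words). -/
noncomputable def diamW (G : Type*) [Group G] (X : Set G) : ℕ :=
  sSup (Set.range (wLen X))

/-- Symmetric diameter of `G` with respect to `X`. -/
noncomputable def diamS (G : Type*) [Group G] (X : Set G) : ℕ :=
  sSup (Set.range (sLen X))

/-- Maximum diameter over all generating sets. -/
noncomputable def DW (G : Type*) [Group G] : ℕ :=
  sSup {d | ∃ X : Set G, Subgroup.closure X = ⊤ ∧ d = diamW G X}

/-- Maximum symmetric diameter over all generating sets. -/
noncomputable def DS (G : Type*) [Group G] : ℕ :=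
  sSup {d | ∃ X : Set G, Subgroup.closure X = ⊤ ∧ d = diamS G X}

/-- Minimal size of a generating set of `G`. -/
noncomputable def rk (G : Type*) [Group G] : ℕ :=
  sInf {n | ∃ S : Finset G, S.card = n ∧ Subgroup.closure (S : Set G) = ⊤}

section AuxLemmas

open Finset

/-- Transfer of `closure` between a group and its additive version. -/
lemma myToAddSubgroup_closure {M : Type*} [Group M] (S : Set M) :
    Subgroup.toAddSubgroup (Subgroup.closure S)
      = AddSubgroup.closure (Additive.toMul ⁻¹' S) :=
  le_antisymm
    (Subgroup.toAddSubgroup.to_galoisConnection.l_le <|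
      (Subgroup.closure_le _).2 <| AddSubgroup.subset_closure (G := Additive M))
    ((AddSubgroup.closure_le _).2 <| Subgroup.subset_closure (G := M))

lemma myToAddSubgroup_top {M : Type*} [Group M] :
    Subgroup.toAddSubgroup (⊤ : Subgroup M) = ⊤ := by
  rw [AddSubgroup.eq_top_iff']
  intro x
  exact Subgroup.mem_top (Additive.toMul x)

/-- The rank of a group equals the rank of its additive version. -/
lemma rank_additive (M : Type*) [Group M] [Group.FG M] :
    Group.rank M = AddGroup.rank (Additive M) := by
  classical
  apply le_antisymm
  · obtain ⟨T, hT1, hT2⟩ := AddGroup.rank_spec (Additive M)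
    set S : Finset M := T.image Additive.toMul with hSdef
    have hpre : Additive.toMul ⁻¹' (S : Set M) = (T : Set (Additive M)) := by
      rw [hSdef, Finset.coe_image]
      exact Set.preimage_image_eq _ (Equiv.injective _)
    have h2 := myToAddSubgroup_closure (S : Set M)
    rw [hpre, hT2] at h2
    have hS : Subgroup.closure (S : Set M) = ⊤ := by
      apply Subgroup.toAddSubgroup.injective
      rw [h2, myToAddSubgroup_top]
    calc Group.rank M ≤ S.card := Group.rank_le hS
      _ ≤ T.card := Finset.card_image_le
      _ = _ := hT1
  · obtain ⟨S, hS1, hS2⟩ := Group.rank_spec M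
    set T : Finset (Additive M) := S.image Additive.ofMul with hTdef
    have hpre : Additive.toMul ⁻¹' (S : Set M) = (T : Set (Additive M)) := by
      rw [hTdef, Finset.coe_image]
      ext x
      simp only [Set.mem_preimage, Set.mem_image, Finset.mem_coe]
      exact ⟨fun h => ⟨_, h, rfl⟩, by rintro ⟨y, hy, rfl⟩; exact hy⟩
    have h2 := myToAddSubgroup_closure (S : Set M)
    rw [hpre, hS2, myToAddSubgroup_top] at h2
    have hT : AddSubgroup.closure (T : Set (Additive M)) = ⊤ := h2.symm
    calc AddGroup.rank (Additive M) ≤ T.card := AddGroup.rank_le hT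
      _ ≤ S.card := Finset.card_image_le
      _ = _ := hS1

/-- Any generating set of `(S → ZMod q)` has at least `card S` elements. -/
lemma lemV (S : Type*) [Fintype S] (q : ℕ) [NeZero q] (hq : q.Prime) :
    Fintype.card S ≤ AddGroup.rank (S → ZMod q) := by
  haveI : Fact q.Prime := ⟨hq⟩
  obtain ⟨T, hT1, hT2⟩ := AddGroup.rank_spec (S → ZMod q)
  have hspan : Submodule.span (ZMod q) (T : Set (S → ZMod q)) = ⊤ := by
    rw [eq_top_iff]
    intro v _
    have hv : v ∈ AddSubgroup.closure (T : Set (S → ZMod q)) := by rw [hT2]; trivial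
    have hle : AddSubgroup.closure (T : Set (S → ZMod q)) ≤
        (Submodule.span (ZMod q) (T : Set (S → ZMod q))).toAddSubgroup :=
      (AddSubgroup.closure_le _).2 Submodule.subset_span
    exact hle hv
  have h4 := finrank_span_le_card (R := ZMod q) (T : Set (S → ZMod q))
  rw [hspan, finrank_top, Finset.toFinset_coe] at h4
  rw [← hT1]
  rw [Module.finrank_fintype_fun_eq_card (ZMod q)] at h4
  exact h4

/-- Lower bound on the rank of a product of cyclic groups of prime power order. -/
lemma lemB {ι : Type*} [Fintype ι] (p e : ι → ℕ) [∀ i, NeZero (p i ^ e i)]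
    (hp : ∀ i, (p i).Prime) (q : ℕ) (hq : q.Prime) :
    (Finset.univ.filter fun i => p i = q ∧ e i ≠ 0).card
      ≤ AddGroup.rank (∀ i, ZMod (p i ^ e i)) := by
  classical
  haveI : Fact q.Prime := ⟨hq⟩
  haveI : NeZero q := ⟨hq.ne_zero⟩
  set S := {i : ι // p i = q ∧ e i ≠ 0} with hSdef
  have hdvd : ∀ s : S, q ∣ p s.1 ^ e s.1 := fun s =>
    dvd_trans (dvd_of_eq s.2.1.symm) (dvd_pow_self _ s.2.2)
  let f : (∀ i, ZMod (p i ^ e i)) →+ (S → ZMod q) :=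
    { toFun := fun x s => ZMod.castHom (hdvd s) (ZMod q) (x s.1)
      map_zero' := by funext s; exact map_zero (ZMod.castHom (hdvd s) (ZMod q))
      map_add' := by intro a b; funext s; exact map_add (ZMod.castHom (hdvd s) (ZMod q)) _ _ }
  have hf : Function.Surjective f := by
    intro y
    refine ⟨fun i => (((if h : p i = q ∧ e i ≠ 0 then (y ⟨i, h⟩).val else 0) : ℕ)
      : ZMod (p i ^ e i)), ?_⟩
    funext s
    obtain ⟨i, hi⟩ := s
    show ZMod.castHom (hdvd ⟨i, hi⟩) (ZMod q) _ = y ⟨i, hi⟩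
    rw [map_natCast (ZMod.castHom (hdvd ⟨i, hi⟩) (ZMod q)), dif_pos hi]
    exact ZMod.natCast_rightInverse _
  have h1 : AddGroup.rank (S → ZMod q) ≤ AddGroup.rank (∀ i, ZMod (p i ^ e i)) :=
    AddGroup.rank_le_of_surjective f hf
  have h2 : Fintype.card S ≤ AddGroup.rank (S → ZMod q) := lemV S q hq
  have h3 : (Finset.univ.filter fun i => p i = q ∧ e i ≠ 0).card = Fintype.card S :=
    (Fintype.card_subtype _).symm
  rw [h3]
  exact le_trans h2 h1

/-- Upper bound on the rank of a product of cyclic groups of prime power order. -/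
lemma lemA {ι : Type*} [Fintype ι] [DecidableEq ι] (p e : ι → ℕ)
    [∀ i, NeZero (p i ^ e i)] (hp : ∀ i, (p i).Prime) (m : ℕ)
    (hm : ∀ q : ℕ, (Finset.univ.filter fun i => p i = q ∧ e i ≠ 0).card ≤ m) :
    AddGroup.rank (∀ i, ZMod (p i ^ e i)) ≤ m := by
  classical
  set enc := Fintype.equivFin ι with henc
  set idx : ι → ℕ :=
    fun i => (Finset.univ.filter fun i' => p i' = p i ∧ e i' ≠ 0 ∧ enc i' < enc i).card with hidx
  have hmono : ∀ i i', p i = p i' → e i ≠ 0 → e i' ≠ 0 → enc i < enc i' → idx i < idx i' := by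
    intro i i' hpp he he' hlt
    apply Finset.card_lt_card
    rw [Finset.ssubset_iff_of_subset]
    · exact ⟨i, by simp [hpp, he, hlt], by simp⟩
    · intro x hx
      simp only [mem_filter, mem_univ, true_and] at hx ⊢
      exact ⟨hx.1.trans hpp, hx.2.1, hx.2.2.trans hlt⟩
  have hinj : ∀ i i', p i = p i' → e i ≠ 0 → e i' ≠ 0 → idx i = idx i' → i = i' := by
    intro i i' hpp he he' hidxeq
    by_contra hne
    rcases lt_trichotomy (enc i) (enc i') with h | h | h
    · exact absurd hidxeq (Nat.ne_of_lt (hmono i i' hpp he he' h))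
    · exact hne (enc.injective h)
    · exact absurd hidxeq.symm (Nat.ne_of_lt (hmono i' i hpp.symm he' he h))
  have hlt_m : ∀ i, e i ≠ 0 → idx i < m := by
    intro i hei
    have h1 : idx i < (Finset.univ.filter fun i' => p i' = p i ∧ e i' ≠ 0).card := by
      apply Finset.card_lt_card
      rw [Finset.ssubset_iff_of_subset]
      · exact ⟨i, by simp [hei], by simp⟩
      · intro x hx
        simp only [mem_filter, mem_univ, true_and] at hx ⊢
        exact ⟨hx.1, hx.2.1⟩
    exact h1.trans_le (hm (p i))
  set g : ℕ → ∀ i, ZMod (p i ^ e i) :=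
    fun j i => if idx i = j ∧ e i ≠ 0 then 1 else 0 with hg
  set T : Finset (∀ i, ZMod (p i ^ e i)) := (Finset.range m).image g with hT
  have hsingle : ∀ i, e i ≠ 0 →
      Pi.single (M := fun i => ZMod (p i ^ e i)) i 1
        ∈ AddSubgroup.closure (T : Set (∀ i, ZMod (p i ^ e i))) := by
    intro i hei
    set C : Finset ι := Finset.univ.filter
      fun i' => (idx i' = idx i ∧ e i' ≠ 0) ∧ i' ≠ i with hC
    set M : ℕ := ∏ i' ∈ C, p i' ^ e i' with hM
    have hcop : Nat.Coprime M (p i ^ e i) := by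
      apply Nat.Coprime.prod_left
      intro i' hi'
      rw [hC, mem_filter] at hi'
      obtain ⟨-, ⟨hj, he'⟩, hne⟩ := hi'
      have hpp : p i' ≠ p i := fun hq => hne (hinj i' i hq he' hei hj)
      exact Nat.Coprime.pow _ _ ((Nat.coprime_primes (hp i') (hp i)).mpr hpp)
    set c : ℕ := ((M : ZMod (p i ^ e i))⁻¹).val with hc
    have hgval : ∀ j i'', g j i'' = if idx i'' = j ∧ e i'' ≠ 0 then 1 else 0 := fun _ _ => rfl
    have key : (c * M) • g (idx i) = Pi.single (M := fun i => ZMod (p i ^ e i)) i 1 := by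
      funext i'
      rw [Pi.smul_apply]
      by_cases h1 : idx i' = idx i ∧ e i' ≠ 0
      · by_cases h2 : i' = i
        · subst h2
          rw [hgval, if_pos h1, Pi.single_eq_same, nsmul_eq_mul, mul_one]
          push_cast
          have hcast : ((c : ℕ) : ZMod (p i' ^ e i')) = (M : ZMod (p i' ^ e i'))⁻¹ :=
            ZMod.natCast_rightInverse _
          rw [hcast, mul_comm]
          exact ZMod.coe_mul_inv_eq_one M hcop
        · rw [hgval, if_pos h1, Pi.single_eq_of_ne h2, nsmul_eq_mul, mul_one,
            ZMod.natCast_eq_zero_iff]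
          exact Dvd.dvd.mul_left (Finset.dvd_prod_of_mem _ (by
            rw [hC, mem_filter]; exact ⟨mem_univ _, h1, h2⟩)) c
      · have h2 : i' ≠ i := fun h => h1 (by rw [h]; exact ⟨rfl, hei⟩)
        rw [hgval, if_neg h1, smul_zero, Pi.single_eq_of_ne h2]
    have hgj : g (idx i) ∈ AddSubgroup.closure (T : Set (∀ i, ZMod (p i ^ e i))) := by
      apply AddSubgroup.subset_closure
      rw [hT]
      simp only [coe_image, Set.mem_image, mem_coe, mem_range]
      exact ⟨idx i, by simpa using hlt_m i hei, rfl⟩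
    exact key ▸ AddSubgroup.nsmul_mem _ hgj _
  have htop : AddSubgroup.closure (T : Set (∀ i, ZMod (p i ^ e i))) = ⊤ := by
    rw [eq_top_iff]
    intro x _
    rw [← Finset.univ_sum_single x]
    apply AddSubgroup.sum_mem
    intro i _
    by_cases hei : e i = 0
    · haveI : Subsingleton (ZMod (p i ^ e i)) :=
        ZMod.subsingleton_iff.2 (by rw [hei, pow_zero])
      have hx0 : x i = 0 := Subsingleton.elim _ _
      rw [hx0, Pi.single_zero]
      exact zero_mem _
    · have h1 := hsingle i hei
      have h2 : Pi.single (M := fun i => ZMod (p i ^ e i)) i (x i)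
          = (x i).val • Pi.single (M := fun i => ZMod (p i ^ e i)) i 1 := by
        rw [← Pi.single_smul, nsmul_eq_mul, mul_one, ZMod.natCast_rightInverse (x i)]
      rw [h2]
      exact AddSubgroup.nsmul_mem _ h1 _
  refine le_trans (AddGroup.rank_le htop) ?_
  exact Finset.card_image_le.trans (by simp)

/-- Upper bound: the rank of a finite direct power. -/
lemma lemU (k : ℕ) (G : Type*) [Group G] [Finite G] :
    Group.rank (Fin k → G) ≤ k * Group.rank G := by
  classical
  obtain ⟨S, hS1, hS2⟩ := Group.rank_spec G
  set T : Finset (Fin k → G) :=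
    ((Finset.univ : Finset (Fin k)) ×ˢ S).image fun x => Pi.mulSingle x.1 x.2 with hT
  have hTtop : Subgroup.closure (T : Set (Fin k → G)) = ⊤ := by
    rw [eq_top_iff]
    intro g _
    rw [← Finset.noncommProd_mulSingle g]
    apply Subgroup.noncommProd_mem
    intro i _
    have hg : g i ∈ Subgroup.closure (S : Set G) := by rw [hS2]; trivial
    have h2 : (Subgroup.closure (S : Set G)).map (MonoidHom.mulSingle (fun _ : Fin k => G) i)
        = Subgroup.closure ((MonoidHom.mulSingle (fun _ : Fin k => G) i) '' S) :=
      MonoidHom.map_closure _ _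
    have h3 : Subgroup.closure ((MonoidHom.mulSingle (fun _ : Fin k => G) i) '' S)
        ≤ Subgroup.closure (T : Set (Fin k → G)) := by
      apply Subgroup.closure_mono
      rintro _ ⟨s, hs, rfl⟩
      rw [hT]
      simp only [coe_image, Set.mem_image, mem_coe, Finset.mem_product]
      exact ⟨(i, s), ⟨mem_univ _, hs⟩, rfl⟩
    apply h3
    rw [← h2]
    exact ⟨g i, hg, rfl⟩
  calc Group.rank (Fin k → G) ≤ T.card := Group.rank_le hTtop
    _ ≤ ((Finset.univ : Finset (Fin k)) ×ˢ S).card := Finset.card_image_le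
    _ = k * S.card := by rw [Finset.card_product, Finset.card_univ, Fintype.card_fin]
    _ = k * Group.rank G := by rw [hS1]

/-- `rk` agrees with mathlib's `Group.rank`. -/
lemma rk_eq (G : Type*) [Group G] [Finite G] : rk G = Group.rank G := by
  unfold rk
  apply le_antisymm
  · obtain ⟨S, h1, h2⟩ := Group.rank_spec G
    exact Nat.sInf_le ⟨S, h1, h2⟩
  · have hne : {n | ∃ S : Finset G, S.card = n ∧ Subgroup.closure (S : Set G) = ⊤}.Nonempty :=
      ⟨Group.rank G, Group.rank_spec G⟩
    obtain ⟨S, hS1, hS2⟩ := Nat.sInf_mem hne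
    calc Group.rank G ≤ S.card := Group.rank_le hS2
      _ = _ := hS1

/-- Core lower bound for finite commutative groups. -/
lemma core (k : ℕ) (A : Type*) [CommGroup A] [Finite A] :
    k * Group.rank A ≤ Group.rank (Fin k → A) := by
  classical
  obtain ⟨ι, fι, p, hp, e, ⟨eqv⟩⟩ := AddCommGroup.equiv_directSum_zmod_of_finite (Additive A)
  haveI := fι
  haveI : ∀ i, NeZero (p i ^ e i) := fun i => ⟨pow_ne_zero _ (hp i).ne_zero⟩
  haveI : ∀ x : Fin k × ι, NeZero (p x.2 ^ e x.2) := fun x => ⟨pow_ne_zero _ (hp x.2).ne_zero⟩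
  let eqv2 : Additive A ≃+ ∀ i, ZMod (p i ^ e i) :=
    eqv.trans (DirectSum.addEquivProd _)
  let e31 : Additive (Fin k → A) ≃+ (Fin k → Additive A) :=
    { toFun := fun x i => Additive.ofMul (Additive.toMul x i)
      invFun := fun y => Additive.ofMul fun i => Additive.toMul (y i)
      left_inv := fun _ => rfl
      right_inv := fun _ => rfl
      map_add' := fun _ _ => rfl }
  let e33 : (Fin k → ∀ i : ι, ZMod (p i ^ e i)) ≃+ (∀ x : Fin k × ι, ZMod (p x.2 ^ e x.2)) :=
    { toFun := fun f x => f x.1 x.2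
      invFun := fun g j i => g (j, i)
      left_inv := fun _ => rfl
      right_inv := fun _ => rfl
      map_add' := fun _ _ => rfl }
  let eqv3 : Additive (Fin k → A) ≃+ (∀ x : Fin k × ι, ZMod (p x.2 ^ e x.2)) :=
    e31.trans ((AddEquiv.piCongrRight fun _ => eqv2).trans e33)
  have h1 : Group.rank A = AddGroup.rank (∀ i, ZMod (p i ^ e i)) :=
    (rank_additive A).trans (AddGroup.rank_congr eqv2)
  have h2 : Group.rank (Fin k → A) = AddGroup.rank (∀ x : Fin k × ι, ZMod (p x.2 ^ e x.2)) :=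
    (rank_additive _).trans (AddGroup.rank_congr eqv3)
  set cnt : ℕ → ℕ := fun q => (Finset.univ.filter fun i => p i = q ∧ e i ≠ 0).card with hcnt
  set m := Finset.univ.sup fun i => cnt (p i) with hmdef
  have hm : ∀ q, cnt q ≤ m := by
    intro q
    rcases (Finset.univ.filter fun i => p i = q ∧ e i ≠ 0).eq_empty_or_nonempty with h | h
    · rw [hcnt]
      simp only [h, Finset.card_empty]
      exact Nat.zero_le _
    · obtain ⟨i0, hi0⟩ := h
      have hq : p i0 = q := (mem_filter.1 hi0).2.1
      calc cnt q = cnt (p i0) := by rw [hq]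
        _ ≤ m := Finset.le_sup (f := fun i => cnt (p i)) (mem_univ i0)
  have hA_le : Group.rank A ≤ m := by
    rw [h1]
    exact lemA p e hp m hm
  rcases Nat.eq_zero_or_pos m with hm0 | hmpos
  · calc k * Group.rank A ≤ k * m := Nat.mul_le_mul_left k hA_le
      _ = 0 := by rw [hm0, mul_zero]
      _ ≤ _ := Nat.zero_le _
  · have hne : (Finset.univ : Finset ι).Nonempty := by
      by_contra h
      rw [Finset.not_nonempty_iff_eq_empty] at h
      rw [hmdef, h, Finset.sup_empty] at hmpos
      exact lt_irrefl 0 hmpos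
    obtain ⟨i0, -, hi0⟩ := Finset.exists_mem_eq_sup Finset.univ hne fun i => cnt (p i)
    have hb := lemB (fun x : Fin k × ι => p x.2) (fun x => e x.2) (fun x => hp x.2)
      (p i0) (hp i0)
    have hcard : (Finset.univ.filter fun x : Fin k × ι => p x.2 = p i0 ∧ e x.2 ≠ 0).card
        = k * cnt (p i0) := by
      have hprod : (Finset.univ.filter fun x : Fin k × ι => p x.2 = p i0 ∧ e x.2 ≠ 0)
          = (Finset.univ : Finset (Fin k)) ×ˢ
            (Finset.univ.filter fun i => p i = p i0 ∧ e i ≠ 0) := by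
        ext x
        simp [Finset.mem_product]
      rw [hprod, Finset.card_product, Finset.card_univ, Fintype.card_fin, hcnt]
    calc k * Group.rank A ≤ k * m := Nat.mul_le_mul_left k hA_le
      _ = k * cnt (p i0) := by rw [hmdef, hi0]
      _ = (Finset.univ.filter fun x : Fin k × ι => p x.2 = p i0 ∧ e x.2 ≠ 0).card := hcard.symm
      _ ≤ AddGroup.rank (∀ x : Fin k × ι, ZMod (p x.2 ^ e x.2)) := hb
      _ = Group.rank (Fin k → A) := h2.symm

end AuxLemmas

theorem stmt3 {G : Type*} [Group G] [Fintype G] (k : ℕ) (hk : 0 < k) :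
    k * rk (G ⧸ commutator G) ≤ rk (Fin k → G) ∧
      rk (Fin k → G) ≤ k * rk G := by
  haveI : Finite (G ⧸ commutator G) := inferInstance
  constructor
  · letI : CommGroup (G ⧸ commutator G) := Abelianization.commGroup G
    rw [rk_eq, rk_eq]
    refine (core k (G ⧸ commutator G)).trans ?_
    have hsurj : Function.Surjective (QuotientGroup.mk : G → G ⧸ commutator G) :=
      QuotientGroup.mk_surjective
    let f : (Fin k → G) →* (Fin k → G ⧸ commutator G) :=
      MonoidHom.mk' (fun x i => QuotientGroup.mk (x i)) (fun a b => rfl)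
    have hf : Function.Surjective f := fun y =>
      ⟨fun i => (hsurj (y i)).choose, funext fun i => (hsurj (y i)).choose_spec⟩
    exact Group.rank_le_of_surjective f hf
  · rw [rk_eq, rk_eq]
    exact lemU k G
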